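/- For every g = (M,(λ,μ,κ)) ∈ G^J with M = [[A,B],[C,D]], set P = ½((A+D)+i(B−C)), Q = ½((A−D)−i(B+C)), λ_* = ½(λ+iμ), μ_* = ½(λ−iμ). Then for every (W,η) ∈ 𝐃_{n,m} the matrix Q̄W+P̄ is invertible, the point g⋆(W,η) = ((PW+Q)(Q̄W+P̄)^(−1), (η+λ_*W+μ_*)(Q̄W+P̄)^(−1)) lies in 𝐃_{n,m}, and the action of G^J on 𝐇_{n,m} is compatible with this action through the partial Cayley transform: g·Φ_*(W,η) = Φ_*(g⋆(W,η)). -/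

import Mathlib

noncomputable section
open Matrix Complex

abbrev Mat (a b : ℕ) (R : Type) := Matrix (Fin a) (Fin b) R

def Jn (n : ℕ) : Matrix (Fin n ⊕ Fin n) (Fin n ⊕ Fin n) ℝ :=
  Matrix.fromBlocks 0 1 (-1) 0

def Sp (n : ℕ) : Set (Matrix (Fin n ⊕ Fin n) (Fin n ⊕ Fin n) ℝ) :=
  {M | Mᵀ * Jn n * M = Jn n}

def blkA {n : ℕ} (M : Matrix (Fin n ⊕ Fin n) (Fin n ⊕ Fin n) ℝ) : Mat n n ℂ :=
  (Matrix.toBlocks₁₁ M).map (Complex.ofReal)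
def blkB {n : ℕ} (M : Matrix (Fin n ⊕ Fin n) (Fin n ⊕ Fin n) ℝ) : Mat n n ℂ :=
  (Matrix.toBlocks₁₂ M).map (Complex.ofReal)
def blkC {n : ℕ} (M : Matrix (Fin n ⊕ Fin n) (Fin n ⊕ Fin n) ℝ) : Mat n n ℂ :=
  (Matrix.toBlocks₂₁ M).map (Complex.ofReal)
def blkD {n : ℕ} (M : Matrix (Fin n ⊕ Fin n) (Fin n ⊕ Fin n) ℝ) : Mat n n ℂ :=
  (Matrix.toBlocks₂₂ M).map (Complex.ofReal)

def SiegelH (n : ℕ) : Set (Mat n n ℂ) :=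
  {Ω | Ω.IsSymm ∧ (Ω.map Complex.im).PosDef}

def spAct {n : ℕ} (M : Matrix (Fin n ⊕ Fin n) (Fin n ⊕ Fin n) ℝ) (Ω : Mat n n ℂ) : Mat n n ℂ :=
  (blkA M * Ω + blkB M) * (blkC M * Ω + blkD M)⁻¹

/-- An element of the Jacobi group G^J = Sp(n,ℝ) ⋉ H_ℝ^(n,m):
a symplectic part together with (λ, μ, κ). -/
abbrev GJ (n m : ℕ) :=
  Matrix (Fin n ⊕ Fin n) (Fin n ⊕ Fin n) ℝ × Mat m n ℝ × Mat m n ℝ × Mat m m ℝ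

/-- The Siegel-Jacobi space 𝐇_{n,m} = 𝐇ₙ × ℂ^(m,n). -/
def HJ (n m : ℕ) : Set (Mat n n ℂ × Mat m n ℂ) := {p | p.1 ∈ SiegelH n}

/-- The action of G^J on 𝐇_{n,m}:
(M,(λ,μ,κ))·(Ω,Z) = (M∘Ω, (Z+λΩ+μ)(CΩ+D)⁻¹). -/
def jAct {n m : ℕ} (g : GJ n m) (p : Mat n n ℂ × Mat m n ℂ) :
    Mat n n ℂ × Mat m n ℂ :=
  (spAct g.1 p.1,
    (p.2 + g.2.1.map Complex.ofReal * p.1 + g.2.2.1.map Complex.ofReal) *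
      (blkC g.1 * p.1 + blkD g.1)⁻¹)
open scoped ComplexOrder

/-- Entrywise complex conjugate of a matrix. -/
def conjM {a b : ℕ} (W : Mat a b ℂ) : Mat a b ℂ := W.map (starRingEnd ℂ)

/-- The generalized unit disk 𝐃ₙ: symmetric W with Iₙ − WW̄ positive definite. -/
def SiegelD (n : ℕ) : Set (Mat n n ℂ) :=
  {W | W.IsSymm ∧ (1 - W * conjM W).PosDef}

/-- The Siegel-Jacobi disk 𝐃_{n,m} = 𝐃ₙ × ℂ^(m,n). -/
def DJ (n m : ℕ) : Set (Mat n n ℂ × Mat m n ℂ) := {p | p.1 ∈ SiegelD n}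

/-- The partial Cayley transform
Φ_*(W,η) = (i(Iₙ+W)(Iₙ−W)⁻¹, 2iη(Iₙ−W)⁻¹). -/
def cayley {n m : ℕ} (p : Mat n n ℂ × Mat m n ℂ) : Mat n n ℂ × Mat m n ℂ :=
  (Complex.I • ((1 + p.1) * (1 - p.1)⁻¹), (2 * Complex.I) • (p.2 * (1 - p.1)⁻¹))

/-- P = ½((A+D)+i(B−C)) for M = [[A,B],[C,D]] ∈ Sp(n,ℝ). -/
def Pm {n : ℕ} (M : Matrix (Fin n ⊕ Fin n) (Fin n ⊕ Fin n) ℝ) : Mat n n ℂ :=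
  (1/2 : ℂ) • ((M.toBlocks₁₁ + M.toBlocks₂₂).map Complex.ofReal
    + Complex.I • (M.toBlocks₁₂ - M.toBlocks₂₁).map Complex.ofReal)

/-- Q = ½((A−D)−i(B+C)) for M = [[A,B],[C,D]] ∈ Sp(n,ℝ). -/
def Qm {n : ℕ} (M : Matrix (Fin n ⊕ Fin n) (Fin n ⊕ Fin n) ℝ) : Mat n n ℂ :=
  (1/2 : ℂ) • ((M.toBlocks₁₁ - M.toBlocks₂₂).map Complex.ofReal
    - Complex.I • (M.toBlocks₁₂ + M.toBlocks₂₁).map Complex.ofReal)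

/-- λ_* = ½(λ+iμ). -/
def lamStar {a b : ℕ} (lam mu : Mat a b ℝ) : Mat a b ℂ :=
  (1/2 : ℂ) • (lam.map Complex.ofReal + Complex.I • mu.map Complex.ofReal)

/-- μ_* = ½(λ−iμ). -/
def muStar {a b : ℕ} (lam mu : Mat a b ℝ) : Mat a b ℂ :=
  (1/2 : ℂ) • (lam.map Complex.ofReal - Complex.I • mu.map Complex.ofReal)

/-- The action of g = (M,(λ,μ,κ)) ∈ G^J on the Siegel-Jacobi disk 𝐃_{n,m},
obtained from the action on 𝐇_{n,m} by transport through the partial Cayley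
transform:
g ⋆ (W,η) = ((PW+Q)(Q̄W+P̄)⁻¹, (η+λ_*W+μ_*)(Q̄W+P̄)⁻¹). -/
def jActD {n m : ℕ} (g : GJ n m) (p : Mat n n ℂ × Mat m n ℂ) :
    Mat n n ℂ × Mat m n ℂ :=
  ((Pm g.1 * p.1 + Qm g.1) * (conjM (Qm g.1) * p.1 + conjM (Pm g.1))⁻¹,
   (p.2 + lamStar g.2.1 g.2.2.1 * p.1 + muStar g.2.1 g.2.2.1) *
     (conjM (Qm g.1) * p.1 + conjM (Pm g.1))⁻¹)

/- STATEMENT 15 (Theorem 5): The action of G^J on 𝐇_{n,m} is compatible with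
the transported action on the Siegel-Jacobi disk 𝐃_{n,m} through the partial
Cayley transform: g·Φ_*(W,η) = Φ_*(g⋆(W,η)). -/

section Aux

variable {n m a b c : ℕ}

@[simp] lemma conjM_mul (X : Mat a b ℂ) (Y : Mat b c ℂ) :
    conjM (X * Y) = conjM X * conjM Y := by
  simp [conjM, Matrix.map_mul]

@[simp] lemma conjM_add (X Y : Mat a b ℂ) : conjM (X + Y) = conjM X + conjM Y := by
  ext i j; simp [conjM]

@[simp] lemma conjM_sub (X Y : Mat a b ℂ) : conjM (X - Y) = conjM X - conjM Y := by
  ext i j; simp [conjM]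

@[simp] lemma conjM_conjM (X : Mat a b ℂ) : conjM (conjM X) = X := by
  ext i j; simp [conjM]

@[simp] lemma conjM_one : conjM (1 : Mat a a ℂ) = 1 := by
  simp [conjM]

lemma conjM_transpose (X : Mat a b ℂ) : conjM Xᵀ = (conjM X)ᵀ := by
  ext i j; simp [conjM]

lemma conjTranspose_eq_conjM (X : Mat a b ℂ) : Xᴴ = (conjM X)ᵀ := by
  ext i j; simp [conjM, Matrix.conjTranspose_apply]

@[simp] lemma conjM_smul (z : ℂ) (X : Mat a b ℂ) :
    conjM (z • X) = (starRingEnd ℂ z) • conjM X := by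
  ext i j; simp [conjM]

@[simp] lemma conjM_map_ofReal (X : Mat a b ℝ) :
    conjM (X.map Complex.ofReal) = X.map Complex.ofReal := by
  ext i j; simp [conjM]

end Aux
section Aux2
variable {k : ℕ}

lemma posDef_conjM {M : Mat k k ℂ} (h : M.PosDef) : (conjM M).PosDef := by
  have h1 : conjM M = Mᵀ := by
    have := h.1
    rw [Matrix.IsHermitian] at this
    calc conjM M = conjM (Mᴴ) := by rw [this]
    _ = Mᵀ := by rw [conjTranspose_eq_conjM, conjM_transpose, conjM_conjM]
  rw [h1]; exact h.transpose

lemma posDef_isUnit {M : Mat k k ℂ} (h : M.PosDef) : IsUnit M := by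
  rw [Matrix.isUnit_iff_isUnit_det, isUnit_iff_ne_zero]
  intro hdet
  obtain ⟨v, hv0, hv⟩ := (Matrix.exists_mulVec_eq_zero_iff).2 hdet
  have := h.dotProduct_mulVec_pos hv0
  rw [hv] at this
  simp at this

-- for W in the Siegel disk, 1 - conjM W * W is positive definite
lemma posdef_one_sub_conj {W : Mat k k ℂ} (hs : W.IsSymm)
    (h : (1 - W * conjM W).PosDef) : (1 - conjM W * W).PosDef := by
  have : (1 : Mat k k ℂ) - conjM W * W = conjM (1 - W * conjM W) := by
    simp
  rw [this]; exact posDef_conjM h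

lemma isUnit_one_sub_of_posdef {W : Mat k k ℂ} (h : (1 - conjM W * W).PosDef)
    (hs : W.IsSymm) : IsUnit ((1 : Mat k k ℂ) - W) := by
  rw [Matrix.isUnit_iff_isUnit_det, isUnit_iff_ne_zero]
  intro hdet
  obtain ⟨v, hv0, hv⟩ := (Matrix.exists_mulVec_eq_zero_iff).2 hdet
  have hWv : W.mulVec v = v := by
    have : v - W.mulVec v = 0 := by
      rw [← hv, Matrix.sub_mulVec, Matrix.one_mulVec]
    have := sub_eq_zero.mp this
    exact this.symm
  have hconj : conjM W = Wᴴ := by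
    rw [conjTranspose_eq_conjM, ← conjM_transpose, hs.eq]
  have key : star v ⬝ᵥ (1 - conjM W * W).mulVec v = 0 := by
    rw [Matrix.sub_mulVec, Matrix.one_mulVec, dotProduct_sub, hconj,
      ← Matrix.mulVec_mulVec, hWv]
    rw [Matrix.dotProduct_mulVec (star v) Wᴴ, ← Matrix.star_mulVec, hWv]
    simp
  have := h.dotProduct_mulVec_pos hv0
  rw [key] at this
  simp at this

end Aux2
section Aux3
variable {n : ℕ}

lemma mapR_mul {a b c : ℕ} (X : Matrix (Fin a) (Fin b) ℝ) (Y : Matrix (Fin b) (Fin c) ℝ) :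
    ((X * Y).map Complex.ofReal) = X.map Complex.ofReal * Y.map Complex.ofReal := by
  ext i j; simp [Matrix.mul_apply]

lemma mapR_transpose {a b : ℕ} (X : Matrix (Fin a) (Fin b) ℝ) :
    (Xᵀ.map Complex.ofReal) = (X.map Complex.ofReal)ᵀ := by
  ext i j; simp

lemma sp_rels {M : Matrix (Fin n ⊕ Fin n) (Fin n ⊕ Fin n) ℝ} (hM : M ∈ Sp n) :
    (blkA M)ᵀ * blkC M = (blkC M)ᵀ * blkA M ∧
    (blkB M)ᵀ * blkD M = (blkD M)ᵀ * blkB M ∧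
    (blkA M)ᵀ * blkD M = 1 + (blkC M)ᵀ * blkB M ∧
    (blkD M)ᵀ * blkA M = 1 + (blkB M)ᵀ * blkC M := by
  have hg : Mᵀ * Jn n * M = Jn n := hM
  set A0 := M.toBlocks₁₁ with hA0
  set B0 := M.toBlocks₁₂ with hB0
  set C0 := M.toBlocks₂₁ with hC0
  set D0 := M.toBlocks₂₂ with hD0
  have hMdec : M = Matrix.fromBlocks A0 B0 C0 D0 := (Matrix.fromBlocks_toBlocks M).symm
  rw [hMdec] at hg
  rw [Jn, Matrix.fromBlocks_transpose, Matrix.fromBlocks_multiply,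
    Matrix.fromBlocks_multiply] at hg
  simp only [Matrix.mul_zero, Matrix.zero_mul, Matrix.mul_one, Matrix.one_mul,
    Matrix.mul_neg, Matrix.neg_mul, add_zero, zero_add, Matrix.mul_zero] at hg
  have h11 := congrArg Matrix.toBlocks₁₁ hg
  have h12 := congrArg Matrix.toBlocks₁₂ hg
  have h21 := congrArg Matrix.toBlocks₂₁ hg
  have h22 := congrArg Matrix.toBlocks₂₂ hg
  simp only [Matrix.toBlocks_fromBlocks₁₁, Matrix.toBlocks_fromBlocks₁₂,
    Matrix.toBlocks_fromBlocks₂₁, Matrix.toBlocks_fromBlocks₂₂] at h11 h12 h21 h22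

  have rAC : A0ᵀ * C0 = C0ᵀ * A0 := by linear_combination (norm := abel) h11
  have rBD : B0ᵀ * D0 = D0ᵀ * B0 := by linear_combination (norm := abel) h22
  have rAD : A0ᵀ * D0 = 1 + C0ᵀ * B0 := by linear_combination (norm := abel) h12
  have rDA : D0ᵀ * A0 = 1 + B0ᵀ * C0 := by linear_combination (norm := abel) -h21
  refine ⟨?_, ?_, ?_, ?_⟩ <;>
    simp only [blkA, blkB, blkC, blkD, ← hA0, ← hB0, ← hC0, ← hD0, ← mapR_transpose,
      ← mapR_mul, rAC, rBD, rAD, rDA] <;> ext i j <;> simp [Matrix.one_apply, apply_ite]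
end Aux3
section Aux4
variable {n : ℕ}

lemma Pm_eq (M : Matrix (Fin n ⊕ Fin n) (Fin n ⊕ Fin n) ℝ) :
    Pm M = (1/2 : ℂ) • (blkA M + blkD M + Complex.I • (blkB M - blkC M)) := by
  ext i j
  simp [Pm, blkA, blkB, blkC, blkD, Matrix.add_apply, Matrix.sub_apply, map_ofNat]
  all_goals ring

lemma Qm_eq (M : Matrix (Fin n ⊕ Fin n) (Fin n ⊕ Fin n) ℝ) :
    Qm M = (1/2 : ℂ) • (blkA M - blkD M - Complex.I • (blkB M + blkC M)) := by
  ext i j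
  simp [Qm, blkA, blkB, blkC, blkD, Matrix.add_apply, Matrix.sub_apply, map_ofNat]
  all_goals ring

lemma conjM_Pm_eq (M : Matrix (Fin n ⊕ Fin n) (Fin n ⊕ Fin n) ℝ) :
    conjM (Pm M) = (1/2 : ℂ) • (blkA M + blkD M - Complex.I • (blkB M - blkC M)) := by
  ext i j
  simp [conjM, Pm, blkA, blkB, blkC, blkD, Matrix.add_apply, Matrix.sub_apply, map_ofNat]
  all_goals ring

lemma conjM_Qm_eq (M : Matrix (Fin n ⊕ Fin n) (Fin n ⊕ Fin n) ℝ) :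
    conjM (Qm M) = (1/2 : ℂ) • (blkA M - blkD M + Complex.I • (blkB M + blkC M)) := by
  ext i j
  simp [conjM, Qm, blkA, blkB, blkC, blkD, Matrix.add_apply, Matrix.sub_apply, map_ofNat]
  all_goals ring

lemma PQ_rel1 {M : Matrix (Fin n ⊕ Fin n) (Fin n ⊕ Fin n) ℝ} (hM : M ∈ Sp n) :
    (Pm M)ᵀ * conjM (Qm M) = (conjM (Qm M))ᵀ * (Pm M) := by
  obtain ⟨rAC, rBD, rAD, rDA⟩ := sp_rels hM
  rw [conjM_Qm_eq, Pm_eq]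
  simp only [Matrix.transpose_smul, Matrix.transpose_add, Matrix.transpose_sub,
    Matrix.smul_mul, Matrix.mul_smul, add_mul, mul_add, sub_mul, mul_sub,
    smul_add, smul_sub, smul_smul]
  simp only [rAC, rBD, rAD, rDA]
  match_scalars <;> ring_nf <;> (try simp only [Complex.I_sq]) <;> ring_nf

lemma PQ_rel2 {M : Matrix (Fin n ⊕ Fin n) (Fin n ⊕ Fin n) ℝ} (hM : M ∈ Sp n) :
    (Pm M)ᵀ * conjM (Pm M) - (conjM (Qm M))ᵀ * (Qm M) = 1 := by
  obtain ⟨rAC, rBD, rAD, rDA⟩ := sp_rels hM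
  rw [conjM_Pm_eq, conjM_Qm_eq, Pm_eq, Qm_eq]
  simp only [Matrix.transpose_smul, Matrix.transpose_add, Matrix.transpose_sub,
    Matrix.smul_mul, Matrix.mul_smul, add_mul, mul_add, sub_mul, mul_sub,
    smul_add, smul_sub, smul_smul]
  simp only [rAC, rBD, rAD, rDA]
  match_scalars <;> ring_nf <;> (try simp only [Complex.I_sq]) <;> ring_nf

end Aux4
section Aux5
variable {n m : ℕ}

lemma PQ_rel1' {M : Matrix (Fin n ⊕ Fin n) (Fin n ⊕ Fin n) ℝ} (hM : M ∈ Sp n) :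
    (conjM (Pm M))ᵀ * Qm M = (Qm M)ᵀ * conjM (Pm M) := by
  have h := congrArg conjM (PQ_rel1 hM)
  simpa [conjM_transpose] using h

lemma PQ_rel2' {M : Matrix (Fin n ⊕ Fin n) (Fin n ⊕ Fin n) ℝ} (hM : M ∈ Sp n) :
    (conjM (Pm M))ᵀ * Pm M - (Qm M)ᵀ * conjM (Qm M) = 1 := by
  have h := congrArg conjM (PQ_rel2 hM)
  simpa [conjM_transpose] using h

lemma hl1 (M : Matrix (Fin n ⊕ Fin n) (Fin n ⊕ Fin n) ℝ) :
    Complex.I • blkA M + blkB M = Complex.I • (Qm M + conjM (Pm M)) := by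
  ext i j
  simp [blkA, blkB, Qm, Pm, conjM, Matrix.add_apply, Matrix.sub_apply, map_ofNat]
  ring_nf
  all_goals simp [Complex.I_sq]
  all_goals ring

lemma hl2 (M : Matrix (Fin n ⊕ Fin n) (Fin n ⊕ Fin n) ℝ) :
    Complex.I • blkA M - blkB M = Complex.I • (Pm M + conjM (Qm M)) := by
  ext i j
  simp [blkA, blkB, Qm, Pm, conjM, Matrix.add_apply, Matrix.sub_apply, map_ofNat]
  ring_nf
  all_goals simp [Complex.I_sq]
  all_goals ring

lemma hl3 (M : Matrix (Fin n ⊕ Fin n) (Fin n ⊕ Fin n) ℝ) :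
    Complex.I • blkC M + blkD M = conjM (Pm M) - Qm M := by
  ext i j
  simp [blkC, blkD, Qm, Pm, conjM, Matrix.add_apply, Matrix.sub_apply, map_ofNat]
  ring_nf
  all_goals simp [Complex.I_sq]
  all_goals ring

lemma hl4 (M : Matrix (Fin n ⊕ Fin n) (Fin n ⊕ Fin n) ℝ) :
    Complex.I • blkC M - blkD M = conjM (Qm M) - Pm M := by
  ext i j
  simp [blkC, blkD, Qm, Pm, conjM, Matrix.add_apply, Matrix.sub_apply, map_ofNat]
  ring_nf
  all_goals simp [Complex.I_sq]
  all_goals ring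

lemma hl5 (lam mu : Mat m n ℝ) :
    Complex.I • (lam.map Complex.ofReal) + mu.map Complex.ofReal
      = (2 * Complex.I) • muStar lam mu := by
  ext i j
  simp [muStar, Matrix.add_apply, Matrix.sub_apply, map_ofNat]
  ring_nf
  all_goals simp [Complex.I_sq]
  all_goals ring

lemma hl6 (lam mu : Mat m n ℝ) :
    Complex.I • (lam.map Complex.ofReal) - mu.map Complex.ofReal
      = (2 * Complex.I) • lamStar lam mu := by
  ext i j
  simp [lamStar, Matrix.add_apply, Matrix.sub_apply, map_ofNat]
  ring_nf
  all_goals simp [Complex.I_sq]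
  all_goals ring

end Aux5
section Aux6
variable {n : ℕ}

lemma disk_quad (P Q W : Mat n n ℂ) (hW : W.IsSymm)
    (r1 : Pᵀ * conjM Q = (conjM Q)ᵀ * P)
    (r2 : Pᵀ * conjM P - (conjM Q)ᵀ * Q = 1)
    (r1' : (conjM P)ᵀ * Q = Qᵀ * conjM P)
    (r2' : (conjM P)ᵀ * P - Qᵀ * conjM Q = 1) :
    (conjM Q * W + conjM P)ᴴ * (conjM Q * W + conjM P) - (P * W + Q)ᴴ * (P * W + Q)
      = 1 - conjM W * W
    ∧ (conjM Q * W + conjM P)ᵀ * (P * W + Q) = (P * W + Q)ᵀ * (conjM Q * W + conjM P) := by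
  have r2s : Pᵀ * conjM P = 1 + (conjM Q)ᵀ * Q := sub_eq_iff_eq_add.mp r2
  have r2s' : (conjM P)ᵀ * P = 1 + Qᵀ * conjM Q := sub_eq_iff_eq_add.mp r2'
  have hWb : (conjM W)ᵀ = conjM W := by rw [← conjM_transpose, hW.eq]
  have eS : (conjM Q * W + conjM P)ᴴ = conjM W * Qᵀ + Pᵀ := by
    rw [conjTranspose_eq_conjM]
    simp only [conjM_add, conjM_mul, conjM_conjM, Matrix.transpose_add, Matrix.transpose_mul]
    rw [hWb]
  have eR : (P * W + Q)ᴴ = conjM W * (conjM P)ᵀ + (conjM Q)ᵀ := by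
    rw [conjTranspose_eq_conjM]
    simp only [conjM_add, conjM_mul, Matrix.transpose_add, Matrix.transpose_mul,
      conjM_transpose]
    rw [hWb]
  have hSS : (conjM Q * W + conjM P)ᴴ * (conjM Q * W + conjM P)
      = conjM W * (Qᵀ * conjM Q) * W + conjM W * (Qᵀ * conjM P)
        + (Pᵀ * conjM Q) * W + (Pᵀ * conjM P) := by
    rw [eS]; noncomm_ring
  have hRR : (P * W + Q)ᴴ * (P * W + Q)
      = conjM W * ((conjM P)ᵀ * P) * W + conjM W * ((conjM P)ᵀ * Q)
        + ((conjM Q)ᵀ * P) * W + ((conjM Q)ᵀ * Q) := by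
    rw [eR]; noncomm_ring
  constructor
  · rw [hSS, hRR, r1, r1', r2s, r2s']
    noncomm_ring
  · have e1 : (conjM Q * W + conjM P)ᵀ * (P * W + Q)
        = W * ((conjM Q)ᵀ * P) * W + W * ((conjM Q)ᵀ * Q)
          + ((conjM P)ᵀ * P) * W + (conjM P)ᵀ * Q := by
      simp only [Matrix.transpose_add, Matrix.transpose_mul, hW.eq]
      noncomm_ring
    have e2 : (P * W + Q)ᵀ * (conjM Q * W + conjM P)
        = W * (Pᵀ * conjM Q) * W + W * (Pᵀ * conjM P)
          + (Qᵀ * conjM Q) * W + Qᵀ * conjM P := by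
      simp only [Matrix.transpose_add, Matrix.transpose_mul, hW.eq]
      noncomm_ring
    rw [e1, e2, r1, r1', r2s, r2s']
    noncomm_ring

lemma posDef_conj_by {k : ℕ} {X T : Mat k k ℂ} (hX : X.PosDef) (hT : IsUnit T.det) :
    (Tᴴ * X * T).PosDef := by
  refine Matrix.PosDef.of_dotProduct_mulVec_pos ?_ (fun x hx => ?_)
  · have h1 : ((Tᴴ * X) * T)ᴴ = Tᴴ * ((Tᴴ * X)ᴴ) := by rw [Matrix.conjTranspose_mul]
    rw [Matrix.IsHermitian, h1, Matrix.conjTranspose_mul, Matrix.conjTranspose_conjTranspose,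
      hX.1.eq, ← mul_assoc]
  · have hTx : T.mulVec x ≠ 0 := by
      intro h0
      have : T.det = 0 := (Matrix.exists_mulVec_eq_zero_iff).1 ⟨x, hx, h0⟩
      rw [this] at hT; simp at hT
    have key : star x ⬝ᵥ (Tᴴ * X * T).mulVec x
        = star (T.mulVec x) ⬝ᵥ X.mulVec (T.mulVec x) := by
      rw [← Matrix.mulVec_mulVec, ← Matrix.mulVec_mulVec]
      rw [Matrix.dotProduct_mulVec (star x) Tᴴ, ← Matrix.star_mulVec]
    rw [key]
    exact hX.dotProduct_mulVec_pos hTx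

end Aux6
section Aux7

lemma master {n m : ℕ} (A B C D P Q W : Mat n n ℂ) (lc mc eta ls ms : Mat m n ℂ)
    (hWs : W.IsSymm) (hWpos : (1 - W * conjM W).PosDef)
    (r1 : Pᵀ * conjM Q = (conjM Q)ᵀ * P)
    (r2 : Pᵀ * conjM P - (conjM Q)ᵀ * Q = 1)
    (r1' : (conjM P)ᵀ * Q = Qᵀ * conjM P)
    (r2' : (conjM P)ᵀ * P - Qᵀ * conjM Q = 1)
    (e1 : Complex.I • A + B = Complex.I • (Q + conjM P))
    (e2 : Complex.I • A - B = Complex.I • (P + conjM Q))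
    (e3 : Complex.I • C + D = conjM P - Q)
    (e4 : Complex.I • C - D = conjM Q - P)
    (e5 : Complex.I • lc + mc = (2 * Complex.I) • ms)
    (e6 : Complex.I • lc - mc = (2 * Complex.I) • ls) :
    IsUnit (conjM Q * W + conjM P)
    ∧ ((P * W + Q) * (conjM Q * W + conjM P)⁻¹).IsSymm
    ∧ (1 - ((P * W + Q) * (conjM Q * W + conjM P)⁻¹)
          * conjM ((P * W + Q) * (conjM Q * W + conjM P)⁻¹)).PosDef
    ∧ (A * (Complex.I • ((1 + W) * (1 - W)⁻¹)) + B)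
        * (C * (Complex.I • ((1 + W) * (1 - W)⁻¹)) + D)⁻¹
      = Complex.I • ((1 + (P * W + Q) * (conjM Q * W + conjM P)⁻¹)
          * (1 - (P * W + Q) * (conjM Q * W + conjM P)⁻¹)⁻¹)
    ∧ ((2 * Complex.I) • (eta * (1 - W)⁻¹)
          + lc * (Complex.I • ((1 + W) * (1 - W)⁻¹)) + mc)
        * (C * (Complex.I • ((1 + W) * (1 - W)⁻¹)) + D)⁻¹
      = (2 * Complex.I) • (((eta + ls * W + ms) * (conjM Q * W + conjM P)⁻¹)
          * (1 - (P * W + Q) * (conjM Q * W + conjM P)⁻¹)⁻¹) := by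
  have hdisk := disk_quad P Q W hWs r1 r2 r1' r2'
  have hposW : (1 - conjM W * W).PosDef := posdef_one_sub_conj hWs hWpos
  have h1W : IsUnit ((1 : Mat n n ℂ) - W) := isUnit_one_sub_of_posdef hposW hWs
  have hdW : IsUnit ((1 : Mat n n ℂ) - W).det := (Matrix.isUnit_iff_isUnit_det _).1 h1W
  set Pb := conjM P with hPbd
  set Qb := conjM Q with hQbd
  set R := P * W + Q with hRd
  set S := Qb * W + Pb with hSd
  set Ω : Mat n n ℂ := Complex.I • ((1 + W) * (1 - W)⁻¹) with hΩ
  -- S is invertible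
  have hSSpos : (Sᴴ * S).PosDef := by
    have h : Sᴴ * S = (1 - conjM W * W) + Rᴴ * R := sub_eq_iff_eq_add.mp hdisk.1
    rw [h]
    exact hposW.add_posSemidef (Matrix.posSemidef_conjTranspose_mul_self R)
  have hSu : IsUnit S := by
    have h := posDef_isUnit hSSpos
    rw [Matrix.isUnit_iff_isUnit_det, Matrix.det_mul] at h
    exact (Matrix.isUnit_iff_isUnit_det S).2 (IsUnit.mul_iff.mp h).2
  have hSdet : IsUnit S.det := (Matrix.isUnit_iff_isUnit_det S).1 hSu
  have hSHdet : IsUnit (Sᴴ).det := by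
    rw [Matrix.det_conjTranspose]; exact (isUnit_star).2 hSdet
  set W' := R * S⁻¹ with hW'd
  -- symmetry of W'
  have hW's : W'.IsSymm := by
    rw [Matrix.IsSymm, hW'd, Matrix.transpose_mul, Matrix.transpose_nonsing_inv]
    have hStdet : IsUnit (Sᵀ).det := by rwa [Matrix.det_transpose]
    calc Sᵀ⁻¹ * Rᵀ = Sᵀ⁻¹ * Rᵀ * S * S⁻¹ := by
          rw [Matrix.mul_nonsing_inv_cancel_right _ _ hSdet]
      _ = Sᵀ⁻¹ * (Sᵀ * R) * S⁻¹ := by rw [mul_assoc Sᵀ⁻¹ Rᵀ S, ← hdisk.2]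
      _ = R * S⁻¹ := by rw [← mul_assoc, Matrix.nonsing_inv_mul _ hStdet, one_mul]
  -- positive definiteness
  have hW'pos : (1 - conjM W' * W').PosDef := by
    have hc : conjM W' * W' = W'ᴴ * W' := by
      rw [conjTranspose_eq_conjM, ← conjM_transpose, hW's.eq]
    have key : (1 : Mat n n ℂ) - W'ᴴ * W' = (S⁻¹)ᴴ * (1 - conjM W * W) * S⁻¹ := by
      rw [← hdisk.1, Matrix.conjTranspose_nonsing_inv]
      rw [Matrix.mul_sub, Matrix.sub_mul]
      congr 1
      · rw [Matrix.nonsing_inv_mul_cancel_left _ _ hSHdet, Matrix.mul_nonsing_inv _ hSdet]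
      · rw [hW'd, Matrix.conjTranspose_mul, Matrix.conjTranspose_nonsing_inv]
        noncomm_ring
    rw [hc, key]
    exact posDef_conj_by hposW (Matrix.isUnit_nonsing_inv_det S hSdet)
  have hW'posD : (1 - W' * conjM W').PosDef := by
    have h := posDef_conjM hW'pos
    simpa using h
  have h1W' : IsUnit ((1 : Mat n n ℂ) - W') := isUnit_one_sub_of_posdef hW'pos hW's
  have hdW' : IsUnit ((1 : Mat n n ℂ) - W').det := (Matrix.isUnit_iff_isUnit_det _).1 h1W'
  -- numerator/denominator computations
  have hSR : S - R = (1 - W') * S := by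
    rw [hW'd, sub_mul, one_mul, Matrix.nonsing_inv_mul_cancel_right _ _ hSdet]
  have hCD : C * Ω + D = (S - R) * (1 - W)⁻¹ := by
    have h0 : (C * Ω + D) * (1 - W) = S - R := by
      have hSR2 : (Complex.I • C + D) + (Complex.I • C - D) * W = S - R := by
        rw [e3, e4, hSd, hRd]
        noncomm_ring
      rw [← hSR2, hΩ, add_mul, Matrix.mul_smul, Matrix.smul_mul,
        ← mul_assoc C (1 + W) (1 - W)⁻¹,
        Matrix.nonsing_inv_mul_cancel_right _ _ hdW]
      simp only [mul_add, mul_one, mul_sub, sub_mul, add_mul, Matrix.smul_mul, smul_add]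
      module
    calc C * Ω + D = ((C * Ω + D) * (1 - W)) * (1 - W)⁻¹ :=
          (Matrix.mul_nonsing_inv_cancel_right _ _ hdW).symm
      _ = (S - R) * (1 - W)⁻¹ := by rw [h0]
  have hAB : A * Ω + B = (Complex.I • (R + S)) * (1 - W)⁻¹ := by
    have h0 : (A * Ω + B) * (1 - W) = Complex.I • (R + S) := by
      have hAB2 : (Complex.I • A - B) * W + (Complex.I • A + B) = Complex.I • (R + S) := by
        rw [e1, e2, hSd, hRd]
        simp only [Matrix.smul_mul, smul_add, add_mul]
        module
      rw [← hAB2, hΩ, add_mul, Matrix.mul_smul, Matrix.smul_mul,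
        ← mul_assoc A (1 + W) (1 - W)⁻¹,
        Matrix.nonsing_inv_mul_cancel_right _ _ hdW]
      simp only [mul_add, mul_one, mul_sub, sub_mul, add_mul, Matrix.smul_mul, smul_add]
      module
    calc A * Ω + B = ((A * Ω + B) * (1 - W)) * (1 - W)⁻¹ :=
          (Matrix.mul_nonsing_inv_cancel_right _ _ hdW).symm
      _ = (Complex.I • (R + S)) * (1 - W)⁻¹ := by rw [h0]
  have hInvCD : (C * Ω + D)⁻¹ = (1 - W) * (S⁻¹ * (1 - W')⁻¹) := by
    rw [hCD, hSR, Matrix.mul_inv_rev, Matrix.mul_inv_rev,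
      Matrix.nonsing_inv_nonsing_inv _ hdW]
  have cancel1 : ∀ (N : Mat m n ℂ), N * ((1 - W)⁻¹ : Mat n n ℂ) * ((1 - W) * (S⁻¹ * (1 - W')⁻¹))
      = (N * S⁻¹) * (1 - W')⁻¹ := by
    intro N
    rw [Matrix.mul_assoc N ((1 - W)⁻¹ : Mat n n ℂ) _, ← Matrix.mul_assoc ((1 - W)⁻¹ : Mat n n ℂ) (1 - W) _,
      Matrix.nonsing_inv_mul _ hdW, Matrix.one_mul, ← Matrix.mul_assoc]
  have cancel1' : ∀ (N : Mat n n ℂ), N * (1 - W)⁻¹ * ((1 - W) * (S⁻¹ * (1 - W')⁻¹))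
      = (N * S⁻¹) * (1 - W')⁻¹ := by
    intro N
    rw [mul_assoc N (1 - W)⁻¹ _, ← mul_assoc (1 - W)⁻¹ (1 - W) _,
      Matrix.nonsing_inv_mul _ hdW, one_mul, ← mul_assoc]
  refine ⟨hSu, hW's, hW'posD, ?_, ?_⟩
  · rw [hAB, hInvCD, Matrix.smul_mul, Matrix.smul_mul, cancel1']
    have : (R + S) * S⁻¹ = 1 + W' := by
      rw [add_mul, Matrix.mul_nonsing_inv _ hSdet, hW'd, add_comm]
    rw [this]
  · have hNum : (2 * Complex.I) • (eta * (1 - W)⁻¹) + lc * Ω + mc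
        = ((2 * Complex.I) • (eta + ls * W + ms)) * (1 - W)⁻¹ := by
      have h0 : ((2 * Complex.I) • (eta * (1 - W)⁻¹) + lc * Ω + mc) * (1 - W)
          = (2 * Complex.I) • (eta + ls * W + ms) := by
        have hZ : (2 * Complex.I) • (eta + ls * W + ms)
            = (2 * Complex.I) • eta + ((2 * Complex.I) • ls) * W
              + (2 * Complex.I) • ms := by
          simp only [smul_add, Matrix.smul_mul]
        rw [hZ, ← e5, ← e6, hΩ]
        rw [Matrix.add_mul, Matrix.add_mul, Matrix.smul_mul, Matrix.mul_assoc eta (1 - W)⁻¹ (1 - W),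
          Matrix.nonsing_inv_mul _ hdW, Matrix.mul_one,
          Matrix.mul_smul, Matrix.smul_mul,
          ← Matrix.mul_assoc lc (1 + W) (1 - W)⁻¹,
          Matrix.nonsing_inv_mul_cancel_right _ _ hdW]
        simp only [Matrix.mul_add, Matrix.mul_one, Matrix.mul_sub, Matrix.sub_mul,
          Matrix.add_mul, Matrix.smul_mul, smul_add, mul_add, mul_one, mul_sub, sub_mul, add_mul]
        module
      calc (2 * Complex.I) • (eta * (1 - W)⁻¹) + lc * Ω + mc
          = (((2 * Complex.I) • (eta * (1 - W)⁻¹) + lc * Ω + mc) * (1 - W)) * (1 - W)⁻¹ :=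
            (Matrix.mul_nonsing_inv_cancel_right _ _ hdW).symm
        _ = ((2 * Complex.I) • (eta + ls * W + ms)) * (1 - W)⁻¹ := by rw [h0]
    rw [hNum, hInvCD, Matrix.smul_mul, Matrix.smul_mul, cancel1]

end Aux7
theorem jacobi_action_compatible_with_cayley (n m : ℕ)
    (g : GJ n m) (hg : g.1 ∈ Sp n) (p : Mat n n ℂ × Mat m n ℂ) (hp : p ∈ DJ n m) :
    IsUnit (conjM (Qm g.1) * p.1 + conjM (Pm g.1))
    ∧ jActD g p ∈ DJ n m
    ∧ jAct g (cayley p) = cayley (jActD g p) := by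
  obtain ⟨hWs, hWpos⟩ := hp
  obtain ⟨h1, h2, h3, h4, h5⟩ := master (blkA g.1) (blkB g.1) (blkC g.1) (blkD g.1)
      (Pm g.1) (Qm g.1) p.1
      (g.2.1.map Complex.ofReal) (g.2.2.1.map Complex.ofReal) p.2
      (lamStar g.2.1 g.2.2.1) (muStar g.2.1 g.2.2.1)
      hWs hWpos (PQ_rel1 hg) (PQ_rel2 hg) (PQ_rel1' hg) (PQ_rel2' hg)
      (hl1 g.1) (hl2 g.1) (hl3 g.1) (hl4 g.1) (hl5 _ _) (hl6 _ _)
  refine ⟨h1, ⟨h2, h3⟩, ?_⟩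
  refine Prod.ext ?_ ?_
  · show spAct g.1 (cayley p).1 = (cayley (jActD g p)).1
    simp only [spAct, cayley, jActD]
    exact h4
  · show _ = (cayley (jActD g p)).2
    simp only [jAct, spAct, cayley, jActD]
    exact h5
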